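/- Let M ≥ 1 and let S ⊆ {1, …, M} be the set of blocks performing global self-attention, with |S| = T. For each block m ∈ {1, …, M} let Â_m, F_m : E → E with Â_m ρ_m-Lipschitz and F_m θ_m-Lipschitz (ρ_m, θ_m > 0), and for m ∉ S let A_m : E → E satisfy ‖A_m X − Â_m X‖_F ≤ σ_m for all X ∈ E (σ_m ≥ 0). Starting from the same input X^{emb} ∈ E, let the FedAttn trajectory apply X ↦ X + A_m(X) + F_m(X + A_m(X)) at blocks m ∉ S and X ↦ X + Â_m(X) + F_m(X + Â_m(X)) at blocks m ∈ S, and let the centralized trajectory apply the Â_m update at every block; denote the final outputs by X^T and X^*. Then ‖X^T − X^*‖_F ≤ Σ_{m ∉ S} (1+θ_m)·σ_m·∏_{i=m+1}^{M} (1+θ_i)(1+ρ_i), i.e., the fully-local error bound Σ_{m=1}^{M} (1+θ_m)·σ_m·∏_{i=m+1}^{M} (1+θ_i)(1+ρ_i) minus the correction terms Σ_{m ∈ S} (1+θ_m)·σ_m·∏_{i=m+1}^{M} (1+θ_i)(1+ρ_i), provided σ_m is also a valid deviation bound at blocks m ∈ S. (Theorem 3 of the paper: variable synchronization-interval error bound.)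 -/

import Mathlib

/-!
Statement 4 (Theorem 3 of the paper): variable synchronization-interval error
bound. `S ⊆ {1,…,M}` is the set of blocks performing global self-attention
(with `|S| = T`); FedAttn uses the local operator `A m` at blocks `m ∉ S` and
the global operator `Ahat m` at blocks `m ∈ S`, while the centralized
trajectory uses `Ahat m` everywhere. The deviation bound `σ m` is assumed valid
at every block (the "provided" clause of the statement). The conclusion states
`‖Xfed M − Xcen M‖_F ≤ Σ_{m ∉ S} (1+θ m)·σ m·∏_{i=m+1}^{M}(1+θ i)(1+ρ i)`,
which equals the fully-local bound over all `m ∈ {1,…,M}` minus the correction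
terms over `m ∈ S`.
-/

attribute [local instance] Matrix.frobeniusNormedAddCommGroup

theorem fedattn_variable_sync_error_bound
    (L d : ℕ) (hL : 0 < L) (hd : 0 < d)
    (M T : ℕ) (hM : 1 ≤ M)
    (S : Finset ℕ) (hSsub : S ⊆ Finset.Icc 1 M) (hScard : S.card = T)
    (A Ahat F : ℕ → Matrix (Fin L) (Fin d) ℝ → Matrix (Fin L) (Fin d) ℝ)
    (ρ θ σ : ℕ → ℝ)
    (hρ : ∀ m ∈ Finset.Icc 1 M, 0 < ρ m)
    (hθ : ∀ m ∈ Finset.Icc 1 M, 0 < θ m)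
    (hσ : ∀ m ∈ Finset.Icc 1 M, 0 ≤ σ m)
    (hAhat : ∀ m ∈ Finset.Icc 1 M, ∀ X Y, ‖Ahat m X - Ahat m Y‖ ≤ ρ m * ‖X - Y‖)
    (hF : ∀ m ∈ Finset.Icc 1 M, ∀ X Y, ‖F m X - F m Y‖ ≤ θ m * ‖X - Y‖)
    (hdev : ∀ m ∈ Finset.Icc 1 M, ∀ X, ‖A m X - Ahat m X‖ ≤ σ m)
    (Xemb : Matrix (Fin L) (Fin d) ℝ)
    (Xfed Xcen : ℕ → Matrix (Fin L) (Fin d) ℝ)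
    (hfed0 : Xfed 0 = Xemb) (hcen0 : Xcen 0 = Xemb)
    (hfedLocal : ∀ m < M, (m + 1) ∉ S →
      Xfed (m + 1) =
        Xfed m + A (m + 1) (Xfed m) + F (m + 1) (Xfed m + A (m + 1) (Xfed m)))
    (hfedGlobal : ∀ m < M, (m + 1) ∈ S →
      Xfed (m + 1) =
        Xfed m + Ahat (m + 1) (Xfed m) + F (m + 1) (Xfed m + Ahat (m + 1) (Xfed m)))
    (hcen : ∀ m < M,
      Xcen (m + 1) =
        Xcen m + Ahat (m + 1) (Xcen m) + F (m + 1) (Xcen m + Ahat (m + 1) (Xcen m))) :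
    ‖Xfed M - Xcen M‖ ≤
      ∑ m ∈ Finset.Icc 1 M \ S,
        (1 + θ m) * σ m * ∏ i ∈ Finset.Icc (m + 1) M, (1 + θ i) * (1 + ρ i) ∧
    (∑ m ∈ Finset.Icc 1 M \ S,
        (1 + θ m) * σ m * ∏ i ∈ Finset.Icc (m + 1) M, (1 + θ i) * (1 + ρ i)) =
      (∑ m ∈ Finset.Icc 1 M,
        (1 + θ m) * σ m * ∏ i ∈ Finset.Icc (m + 1) M, (1 + θ i) * (1 + ρ i)) -
      ∑ m ∈ S,
        (1 + θ m) * σ m * ∏ i ∈ Finset.Icc (m + 1) M, (1 + θ i) * (1 + ρ i) := by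
  have key : ∀ n, n ≤ M → ‖Xfed n - Xcen n‖ ≤
      ∑ m ∈ Finset.Icc 1 n \ S,
        (1 + θ m) * σ m * ∏ i ∈ Finset.Icc (m + 1) n, (1 + θ i) * (1 + ρ i) := by
    intro n
    induction n with
    | zero => intro _; simp [hfed0, hcen0]
    | succ k ih =>
      intro hk1
      have hkM : k < M := hk1
      have ihk := ih (le_of_lt hkM)
      have hmem : (k + 1) ∈ Finset.Icc 1 M := by simp; omega
      have hθk := hθ (k + 1) hmem
      have hρk := hρ (k + 1) hmem
      have hσk := hσ (k + 1) hmem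
      have hc0 : (0:ℝ) ≤ (1 + θ (k + 1)) * (1 + ρ (k + 1)) := by nlinarith
      have genstep : ∀ (B : Matrix (Fin L) (Fin d) ℝ → Matrix (Fin L) (Fin d) ℝ) (s : ℝ),
          (∀ X, ‖B X - Ahat (k + 1) X‖ ≤ s) →
          ‖(Xfed k + B (Xfed k) + F (k + 1) (Xfed k + B (Xfed k))) -
            (Xcen k + Ahat (k + 1) (Xcen k) +
              F (k + 1) (Xcen k + Ahat (k + 1) (Xcen k)))‖ ≤
          (1 + θ (k + 1)) * (1 + ρ (k + 1)) * ‖Xfed k - Xcen k‖ + (1 + θ (k + 1)) * s := by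
        intro B s hB
        have hUV : ‖(Xfed k + B (Xfed k)) - (Xcen k + Ahat (k + 1) (Xcen k))‖ ≤
            (1 + ρ (k + 1)) * ‖Xfed k - Xcen k‖ + s := by
          have hdecU : (Xfed k + B (Xfed k)) - (Xcen k + Ahat (k + 1) (Xcen k)) =
              ((Xfed k - Xcen k) + (Ahat (k + 1) (Xfed k) - Ahat (k + 1) (Xcen k))) +
              (B (Xfed k) - Ahat (k + 1) (Xfed k)) := by abel
          rw [hdecU]
          have h1 := norm_add_le
            ((Xfed k - Xcen k) + (Ahat (k + 1) (Xfed k) - Ahat (k + 1) (Xcen k)))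
            (B (Xfed k) - Ahat (k + 1) (Xfed k))
          have h2 := norm_add_le (Xfed k - Xcen k)
            (Ahat (k + 1) (Xfed k) - Ahat (k + 1) (Xcen k))
          have h3 := hAhat (k + 1) hmem (Xfed k) (Xcen k)
          have h4 := hB (Xfed k)
          nlinarith [norm_nonneg (Xfed k - Xcen k)]
        have hFb := hF (k + 1) hmem (Xfed k + B (Xfed k))
          (Xcen k + Ahat (k + 1) (Xcen k))
        have hdec2 : (Xfed k + B (Xfed k) + F (k + 1) (Xfed k + B (Xfed k))) -
            (Xcen k + Ahat (k + 1) (Xcen k) +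
              F (k + 1) (Xcen k + Ahat (k + 1) (Xcen k))) =
            ((Xfed k + B (Xfed k)) - (Xcen k + Ahat (k + 1) (Xcen k))) +
            (F (k + 1) (Xfed k + B (Xfed k)) -
              F (k + 1) (Xcen k + Ahat (k + 1) (Xcen k))) := by abel
        rw [hdec2]
        have h5 := norm_add_le
          ((Xfed k + B (Xfed k)) - (Xcen k + Ahat (k + 1) (Xcen k)))
          (F (k + 1) (Xfed k + B (Xfed k)) -
            F (k + 1) (Xcen k + Ahat (k + 1) (Xcen k)))
        nlinarith [norm_nonneg ((Xfed k + B (Xfed k)) - (Xcen k + Ahat (k + 1) (Xcen k)))]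
      have hstep : ‖Xfed (k + 1) - Xcen (k + 1)‖ ≤
          (1 + θ (k + 1)) * (1 + ρ (k + 1)) * ‖Xfed k - Xcen k‖ +
            (if (k + 1) ∈ S then 0 else (1 + θ (k + 1)) * σ (k + 1)) := by
        by_cases hS : (k + 1) ∈ S
        · rw [if_pos hS, hfedGlobal k hkM hS, hcen k hkM]
          have := genstep (Ahat (k + 1)) 0 (fun X => by simp)
          simpa using this
        · rw [if_neg hS, hfedLocal k hkM hS, hcen k hkM]
          exact genstep (A (k + 1)) (σ (k + 1)) (fun X => hdev (k + 1) hmem X)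
      have hIcc : Finset.Icc 1 (k + 1) = insert (k + 1) (Finset.Icc 1 k) :=
        (Finset.insert_Icc_right_eq_Icc_add_one (by omega)).symm
      have hnot : (k + 1) ∉ Finset.Icc 1 k := by simp
      have hterm : ∀ m ∈ Finset.Icc 1 k \ S,
          (1 + θ m) * σ m * ∏ i ∈ Finset.Icc (m + 1) (k + 1), (1 + θ i) * (1 + ρ i) =
          (1 + θ (k + 1)) * (1 + ρ (k + 1)) *
            ((1 + θ m) * σ m * ∏ i ∈ Finset.Icc (m + 1) k, (1 + θ i) * (1 + ρ i)) := by
        intro m hm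
        have hm' : m ∈ Finset.Icc 1 k := (Finset.mem_sdiff.mp hm).1
        have hmk : m ≤ k := (Finset.mem_Icc.mp hm').2
        have hsplit : Finset.Icc (m + 1) (k + 1) = insert (k + 1) (Finset.Icc (m + 1) k) :=
          (Finset.insert_Icc_right_eq_Icc_add_one (by omega)).symm
        rw [hsplit, Finset.prod_insert (by simp)]
        ring
      have hsum : (∑ m ∈ Finset.Icc 1 (k + 1) \ S,
            (1 + θ m) * σ m * ∏ i ∈ Finset.Icc (m + 1) (k + 1), (1 + θ i) * (1 + ρ i)) =
          (1 + θ (k + 1)) * (1 + ρ (k + 1)) *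
            (∑ m ∈ Finset.Icc 1 k \ S,
              (1 + θ m) * σ m * ∏ i ∈ Finset.Icc (m + 1) k, (1 + θ i) * (1 + ρ i)) +
          (if (k + 1) ∈ S then 0 else (1 + θ (k + 1)) * σ (k + 1)) := by
        rw [hIcc]
        by_cases hS : (k + 1) ∈ S
        · rw [Finset.insert_sdiff_of_mem _ hS, if_pos hS, add_zero, Finset.mul_sum]
          exact Finset.sum_congr rfl hterm
        · rw [Finset.insert_sdiff_of_notMem _ hS,
            Finset.sum_insert (by simp [hnot]), if_neg hS]
          have hempty : Finset.Icc (k + 1 + 1) (k + 1) = ∅ := by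
            rw [Finset.Icc_eq_empty]; omega
          rw [hempty, Finset.prod_empty, Finset.mul_sum, Finset.sum_congr rfl hterm]
          ring
      rw [hsum]
      have hmono := mul_le_mul_of_nonneg_left ihk hc0
      have htriv : (0:ℝ) ≤ (if (k + 1) ∈ S then 0 else (1 + θ (k + 1)) * σ (k + 1)) := by
        split
        · exact le_refl 0
        · positivity
      linarith [hstep]
  refine ⟨key M le_rfl, ?_⟩
  exact Finset.sum_sdiff_eq_sub hSsub
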